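/- For every fixed r ≥ 3 and any sequence λ_n := C(n−1,k−1)p_n with λ_n → λ ∈ (0,∞), the expected number of star-collisions of support size r in H(n,k,p_n) is O(n^{2−r}), and hence P(X_r ≥ 1) → 0. -/

import Mathlib

/-- All `k`-element subsets of `[n]`, the possible hyperedges of a `k`-uniform
hypergraph on `n` vertices. -/
def kSets (n k : ℕ) : Finset (Finset (Fin n)) :=
  (Finset.univ : Finset (Fin n)).powersetCard k

/-- The probability, in the random hypergraph `H(n,k,p)` where each `k`-subset is a
hyperedge independently with probability `p`, of a given edge set `E`. -/
noncomputable def hweight (n k : ℕ) (p : ℝ) (E : Finset (Finset (Fin n))) : ℝ :=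
  if E ⊆ kSets n k then p ^ E.card * (1 - p) ^ ((kSets n k).card - E.card) else 0

open Classical in
/-- The probability of an event `A` under `H(n,k,p)`. -/
noncomputable def hprob (n k : ℕ) (p : ℝ) (A : Finset (Finset (Fin n)) → Prop) : ℝ :=
  ∑ E : Finset (Finset (Fin n)), if A E then hweight n k p E else 0

/-- The expectation of a random variable `f` under `H(n,k,p)`. -/
noncomputable def hexp (n k : ℕ) (p : ℝ) (f : Finset (Finset (Fin n)) → ℝ) : ℝ :=
  ∑ E : Finset (Finset (Fin n)), hweight n k p E * f E

/-- The star of a vertex `v`: the set of hyperedges of `E` containing `v`. -/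
def hstar {n : ℕ} (E : Finset (Finset (Fin n))) (v : Fin n) : Finset (Finset (Fin n)) :=
  E.filter (fun e => v ∈ e)

/-- `X_r`: the number of unordered pairs of (distinct) vertices with identical stars of
size exactly `r` (star-collisions of support size `r`). -/
def Xr (n r : ℕ) (E : Finset (Finset (Fin n))) : ℕ :=
  ((Finset.univ : Finset (Fin n)).powersetCard 2 |>.filter
    (fun P => (∀ u ∈ P, ∀ v ∈ P, hstar E u = hstar E v) ∧
      ∀ u ∈ P, (hstar E u).card = r)).card

open Filter Asymptotics

open Finset in
lemma sum_pow_card {α : Type*} [DecidableEq α] (U : Finset α) (p q : ℝ) :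
    ∑ E ∈ U.powerset, p ^ E.card * q ^ (U.card - E.card) = (p + q) ^ U.card := by
  rw [← Finset.prod_const, Finset.prod_add]
  refine Finset.sum_congr rfl fun t ht => ?_
  rw [Finset.mem_powerset] at ht
  rw [Finset.prod_const, Finset.prod_const, Finset.card_sdiff_of_subset ht]

lemma hweight_nonneg {n k : ℕ} {p : ℝ} (hp0 : 0 ≤ p) (hp1 : p ≤ 1)
    (E : Finset (Finset (Fin n))) : 0 ≤ hweight n k p E := by
  unfold hweight
  split
  · exact mul_nonneg (pow_nonneg hp0 _) (pow_nonneg (by linarith) _)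
  · exact le_refl 0

open Finset in
lemma hprob_superset {n k : ℕ} {p : ℝ} (hp0 : 0 ≤ p) (hp1 : p ≤ 1)
    {S : Finset (Finset (Fin n))} (hS : S ⊆ kSets n k) :
    hprob n k p (fun E => S ⊆ E) = p ^ S.card := by
  classical
  have key : hprob n k p (fun E => S ⊆ E)
      = ∑ E : Finset (Finset (Fin n)), (if E ∈ ((kSets n k).powerset.filter (fun E => S ⊆ E)) then
          p ^ E.card * (1 - p) ^ ((kSets n k).card - E.card) else 0) :=
    Finset.sum_congr rfl fun E _ => by
      by_cases h1 : S ⊆ E <;> by_cases h2 : E ⊆ kSets n k <;> simp [hweight, h1, h2]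
  rw [key, Finset.sum_ite_mem, Finset.univ_inter]
  rw [show ((kSets n k).powerset.filter (fun E => S ⊆ E))
      = ((kSets n k) \ S).powerset.image (fun T => S ∪ T) from ?_]
  · rw [Finset.sum_image ?inj]
    case inj =>
      intro a ha b hb hab
      rw [Finset.mem_coe, Finset.mem_powerset] at ha hb
      have da : Disjoint S a := (Finset.sdiff_disjoint.mono_left ha).symm
      have db : Disjoint S b := (Finset.sdiff_disjoint.mono_left hb).symm
      dsimp only at hab
      rw [← Finset.union_sdiff_cancel_left da, hab, Finset.union_sdiff_cancel_left db]
    have : ∀ T ∈ ((kSets n k) \ S).powerset,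
        p ^ (S ∪ T).card * (1 - p) ^ ((kSets n k).card - (S ∪ T).card)
        = p ^ S.card * (p ^ T.card * (1 - p) ^ (((kSets n k) \ S).card - T.card)) := by
      intro T hT
      rw [Finset.mem_powerset] at hT
      have d : Disjoint S T := (Finset.sdiff_disjoint.mono_left hT).symm
      rw [Finset.card_union_of_disjoint d, Finset.card_sdiff_of_subset hS, pow_add, mul_assoc,
        Nat.sub_sub]
    rw [Finset.sum_congr rfl this, ← Finset.mul_sum, sum_pow_card]
    norm_num
  · ext E
    simp only [Finset.mem_filter, Finset.mem_powerset, Finset.mem_image]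
    constructor
    · rintro ⟨hEk, hSE⟩
      exact ⟨E \ S, Finset.sdiff_subset_sdiff hEk le_rfl,
        Finset.union_sdiff_of_subset hSE⟩
    · rintro ⟨T, hT, rfl⟩
      exact ⟨Finset.union_subset hS (hT.trans Finset.sdiff_subset), Finset.subset_union_left⟩

lemma hprob_nonneg {n k : ℕ} {p : ℝ} (hp0 : 0 ≤ p) (hp1 : p ≤ 1)
    (A : Finset (Finset (Fin n)) → Prop) : 0 ≤ hprob n k p A := by
  classical
  refine Finset.sum_nonneg fun E _ => ?_
  split
  · exact hweight_nonneg hp0 hp1 E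
  · exact le_refl 0

lemma hexp_nonneg {n k : ℕ} {p : ℝ} (hp0 : 0 ≤ p) (hp1 : p ≤ 1)
    {f : Finset (Finset (Fin n)) → ℝ} (hf : ∀ E, 0 ≤ f E) : 0 ≤ hexp n k p f :=
  Finset.sum_nonneg fun E _ => mul_nonneg (hweight_nonneg hp0 hp1 E) (hf E)

lemma hprob_union_bound {n k : ℕ} {p : ℝ} (hp0 : 0 ≤ p) (hp1 : p ≤ 1)
    (A : Finset (Finset (Fin n)) → Prop) (T : Finset (Finset (Finset (Fin n))))
    (hT : ∀ E, E ⊆ kSets n k → A E → ∃ S ∈ T, S ⊆ E) :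
    hprob n k p A ≤ ∑ S ∈ T, hprob n k p (fun E => S ⊆ E) := by
  classical
  have : ∀ S ∈ T, hprob n k p (fun E => S ⊆ E)
      = ∑ E : Finset (Finset (Fin n)), (if S ⊆ E then hweight n k p E else 0) :=
    fun S _ => Finset.sum_congr rfl fun E _ => by by_cases h : S ⊆ E <;> simp [h]
  rw [Finset.sum_congr rfl this, Finset.sum_comm]
  refine Finset.sum_le_sum fun E _ => ?_
  have hw := hweight_nonneg hp0 hp1 (n := n) (k := k) (p := p) E
  have hnn : (0:ℝ) ≤ ∑ S ∈ T, if S ⊆ E then hweight n k p E else 0 :=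
    Finset.sum_nonneg fun S _ => by split <;> [exact hw; exact le_refl 0]
  by_cases hA : A E
  · rw [if_pos hA]
    by_cases hE : E ⊆ kSets n k
    · obtain ⟨S₀, hS₀T, hS₀E⟩ := hT E hE hA
      calc hweight n k p E = if S₀ ⊆ E then hweight n k p E else 0 := by rw [if_pos hS₀E]
        _ ≤ _ := Finset.single_le_sum (f := fun S => if S ⊆ E then hweight n k p E else 0)
            (fun S _ => by split <;> [exact hw; exact le_refl 0]) hS₀T
    · simpa [hweight, hE] using hnn
  · rw [if_neg hA]; exact hnn

lemma markov {n k r : ℕ} {p : ℝ} (hp0 : 0 ≤ p) (hp1 : p ≤ 1) :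
    hprob n k p (fun E => 1 ≤ Xr n r E) ≤ hexp n k p (fun E => (Xr n r E : ℝ)) := by
  classical
  refine Finset.sum_le_sum fun E _ => ?_
  have hw := hweight_nonneg hp0 hp1 (n := n) (k := k) (p := p) E
  split
  · next h =>
    calc hweight n k p E = hweight n k p E * 1 := (mul_one _).symm
      _ ≤ _ := by
          refine mul_le_mul_of_nonneg_left ?_ hw
          show (1:ℝ) ≤ (Xr n r E : ℝ)
          exact_mod_cast h
  · positivity

open Finset in
lemma hexp_Xr (n k r : ℕ) (p : ℝ) :
    hexp n k p (fun E => (Xr n r E : ℝ))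
      = ∑ P ∈ (Finset.univ : Finset (Fin n)).powersetCard 2,
          hprob n k p (fun E => (∀ u ∈ P, ∀ v ∈ P, hstar E u = hstar E v) ∧
            ∀ u ∈ P, (hstar E u).card = r) := by
  classical
  have hXr : ∀ E : Finset (Finset (Fin n)), ((Xr n r E : ℕ) : ℝ)
      = ∑ P ∈ (Finset.univ : Finset (Fin n)).powersetCard 2,
          (if (∀ u ∈ P, ∀ v ∈ P, hstar E u = hstar E v) ∧
            ∀ u ∈ P, (hstar E u).card = r then (1:ℝ) else 0) := by
    intro E
    rw [Xr, Finset.card_filter]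
    push_cast
    rfl
  calc hexp n k p (fun E => (Xr n r E : ℝ))
      = ∑ E : Finset (Finset (Fin n)), ∑ P ∈ (Finset.univ : Finset (Fin n)).powersetCard 2,
          (if (∀ u ∈ P, ∀ v ∈ P, hstar E u = hstar E v) ∧
            ∀ u ∈ P, (hstar E u).card = r then hweight n k p E else 0) := by
        refine Finset.sum_congr rfl fun E _ => ?_
        show hweight n k p E * ((Xr n r E : ℕ) : ℝ) = _
        rw [hXr E, Finset.mul_sum]
        refine Finset.sum_congr rfl fun P _ => ?_
        split <;> simp
    _ = ∑ P ∈ (Finset.univ : Finset (Fin n)).powersetCard 2,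
          ∑ E : Finset (Finset (Fin n)),
          (if (∀ u ∈ P, ∀ v ∈ P, hstar E u = hstar E v) ∧
            ∀ u ∈ P, (hstar E u).card = r then hweight n k p E else 0) := Finset.sum_comm
    _ = _ := by
        refine Finset.sum_congr rfl fun P _ => Finset.sum_congr rfl fun E _ => ?_
        by_cases h : (∀ u ∈ P, ∀ v ∈ P, hstar E u = hstar E v) ∧
            ∀ u ∈ P, (hstar E u).card = r <;> simp [h]

open Finset in
lemma Dcard {n k : ℕ} {u v : Fin n} (huv : u ≠ v) :
    ((kSets n k).filter (fun e => u ∈ e ∧ v ∈ e)).card ≤ (n-2).choose (k-2) := by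
  classical
  have h := Finset.card_le_card_of_injOn (s := (kSets n k).filter (fun e => u ∈ e ∧ v ∈ e))
    (f := fun e : Finset (Fin n) => (e.erase u).erase v)
    (t := (((Finset.univ : Finset (Fin n)).erase u).erase v).powersetCard (k-2))
    (fun e he => by
      simp only [Finset.mem_coe, kSets, Finset.mem_filter, Finset.mem_powersetCard] at he
      obtain ⟨⟨_, hek⟩, hu, hv⟩ := he
      rw [Finset.mem_coe, Finset.mem_powersetCard]
      constructor
      · intro x hx
        rw [Finset.mem_erase, Finset.mem_erase] at hx
        exact Finset.mem_erase.2 ⟨hx.1, Finset.mem_erase.2 ⟨hx.2.1, Finset.mem_univ x⟩⟩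
      · rw [Finset.card_erase_of_mem (Finset.mem_erase.2 ⟨huv.symm, hv⟩),
          Finset.card_erase_of_mem hu, hek, Nat.sub_sub])
    (by
      have key : ∀ e ∈ (kSets n k).filter (fun e => u ∈ e ∧ v ∈ e),
          insert u (insert v ((e.erase u).erase v)) = e := by
        intro e he
        rw [Finset.mem_filter] at he
        rw [Finset.insert_erase (Finset.mem_erase.2 ⟨huv.symm, he.2.2⟩),
          Finset.insert_erase he.2.1]
      intro a ha b hb hab
      dsimp only at hab
      rw [← key a (Finset.mem_coe.1 ha), ← key b (Finset.mem_coe.1 hb), hab])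
  refine h.trans (le_of_eq ?_)
  rw [Finset.card_powersetCard, Finset.card_erase_of_mem
    (Finset.mem_erase.2 ⟨huv.symm, Finset.mem_univ v⟩), Finset.card_erase_of_mem
    (Finset.mem_univ u), Finset.card_univ, Fintype.card_fin, Nat.sub_sub]

open Finset in
lemma pair_bound {n k r : ℕ} {p : ℝ} (hp0 : 0 ≤ p) (hp1 : p ≤ 1)
    {P : Finset (Fin n)} (hP : P ∈ (Finset.univ : Finset (Fin n)).powersetCard 2) :
    hprob n k p (fun E => (∀ u ∈ P, ∀ v ∈ P, hstar E u = hstar E v) ∧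
        ∀ u ∈ P, (hstar E u).card = r)
      ≤ (((n-2).choose (k-2) : ℝ) * p) ^ r := by
  classical
  rw [Finset.mem_powersetCard] at hP
  obtain ⟨u, v, huv, rfl⟩ := Finset.card_eq_two.1 hP.2
  set D := (kSets n k).filter (fun e => u ∈ e ∧ v ∈ e) with hD
  have hsub : D ⊆ kSets n k := Finset.filter_subset _ _
  have step1 := hprob_union_bound hp0 hp1
    (fun E => (∀ a ∈ ({u,v} : Finset (Fin n)), ∀ b ∈ ({u,v} : Finset (Fin n)),
        hstar E a = hstar E b) ∧ ∀ a ∈ ({u,v} : Finset (Fin n)), (hstar E a).card = r)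
    (D.powersetCard r) (fun E hE hA => by
      refine ⟨hstar E u, ?_, Finset.filter_subset _ _⟩
      rw [Finset.mem_powersetCard]
      constructor
      · intro e he
        rw [hstar, Finset.mem_filter] at he
        have hv : v ∈ e := by
          have heq := hA.1 u (by simp) v (by simp)
          have : e ∈ hstar E v := heq ▸ (Finset.mem_filter.2 he)
          exact (Finset.mem_filter.1 this).2
        exact Finset.mem_filter.2 ⟨hE he.1, he.2, hv⟩
      · exact hA.2 u (by simp))
  refine step1.trans ?_
  have step2 : ∀ S ∈ D.powersetCard r, hprob n k p (fun E => S ⊆ E) = p ^ r := by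
    intro S hS
    rw [Finset.mem_powersetCard] at hS
    rw [hprob_superset hp0 hp1 (hS.1.trans hsub), hS.2]
  rw [Finset.sum_congr rfl step2, Finset.sum_const, Finset.card_powersetCard, nsmul_eq_mul,
    mul_pow]
  have h1 : ((D.card.choose r : ℕ) : ℝ) ≤ ((n-2).choose (k-2) : ℝ) ^ r := by
    have := (Nat.choose_le_pow D.card r).trans (Nat.pow_le_pow_left (Dcard huv) r)
    exact_mod_cast this
  exact mul_le_mul_of_nonneg_right h1 (pow_nonneg hp0 r)

lemma main_bound {n k r : ℕ} {p : ℝ} (hp0 : 0 ≤ p) (hp1 : p ≤ 1) :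
    hexp n k p (fun E => (Xr n r E : ℝ))
      ≤ (n:ℝ)^2 * ((((n-2).choose (k-2) : ℕ) : ℝ) * p) ^ r := by
  rw [hexp_Xr]
  have h1 : ∑ P ∈ (Finset.univ : Finset (Fin n)).powersetCard 2,
        hprob n k p (fun E => (∀ u ∈ P, ∀ v ∈ P, hstar E u = hstar E v) ∧
          ∀ u ∈ P, (hstar E u).card = r)
      ≤ ∑ _P ∈ (Finset.univ : Finset (Fin n)).powersetCard 2,
        ((((n-2).choose (k-2) : ℕ) : ℝ) * p) ^ r :=
    Finset.sum_le_sum fun P hP => pair_bound hp0 hp1 hP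
  refine h1.trans ?_
  rw [Finset.sum_const, nsmul_eq_mul]
  have h2 : (((Finset.univ : Finset (Fin n)).powersetCard 2).card : ℝ) ≤ (n:ℝ)^2 := by
    rw [Finset.card_powersetCard, Finset.card_univ, Fintype.card_fin]
    exact_mod_cast Nat.choose_le_pow n 2
  exact mul_le_mul_of_nonneg_right h2 (pow_nonneg (mul_nonneg (Nat.cast_nonneg _) hp0) r)

/-- For fixed `r ≥ 3` and `λ_n = C(n-1,k-1) p_n → λ ∈ (0,∞)`, the expected number of
star-collisions of support size `r` in `H(n,k,p_n)` is `O(n^{2-r})`, and hence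
`P(X_r ≥ 1) → 0`. -/
theorem stmt18 (k : ℕ) (hk : 2 ≤ k) (r : ℕ) (hr : 3 ≤ r) (lam : ℝ) (hlam0 : 0 < lam)
    (p : ℕ → ℝ) (hp : ∀ᶠ n in atTop, 0 ≤ p n ∧ p n ≤ 1)
    (hlam : Tendsto (fun n => ((n - 1).choose (k - 1) : ℝ) * p n) atTop (nhds lam)) :
    (fun n => hexp n k (p n) (fun E => (Xr n r E : ℝ)))
        =O[atTop] (fun n => (n : ℝ) ^ ((2 : ℝ) - r))
    ∧ Tendsto (fun n => hprob n k (p n) (fun E => 1 ≤ Xr n r E)) atTop (nhds 0) := by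
  set c : ℝ := (2 * (((k-1 : ℕ)) : ℝ) * (lam+1)) ^ r with hc
  have hlamb : ∀ᶠ n in atTop, ((n - 1).choose (k - 1) : ℝ) * p n < lam + 1 :=
    hlam.eventually (eventually_lt_nhds (by linarith))
  have hub : ∀ᶠ n in atTop, hexp n k (p n) (fun E => (Xr n r E : ℝ))
      ≤ c * (n:ℝ) ^ ((2:ℝ) - r) := by
    filter_upwards [hp, hlamb, eventually_ge_atTop 2] with n hpn hln hn2
    obtain ⟨hp0, hp1⟩ := hpn
    have hn1 : (1:ℝ) ≤ ((n-1 : ℕ) : ℝ) := by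
      have : 1 ≤ n - 1 := by omega
      exact_mod_cast this
    have hnpos : (0:ℝ) < (n:ℝ) := by positivity
    set m : ℝ := (((n-2).choose (k-2) : ℕ) : ℝ) with hm
    -- the choose identity
    have natid : (n-1) * (n-2).choose (k-2) = (n-1).choose (k-1) * (k-1) := by
      have h := Nat.add_one_mul_choose_eq (n-2) (k-2)
      have e1 : n - 2 + 1 = n - 1 := by omega
      have e2 : k - 2 + 1 = k - 1 := by omega
      simpa [Nat.succ_eq_add_one, e1, e2] using h
    have hid : ((n-1:ℕ) : ℝ) * m = (((n-1).choose (k-1) : ℕ) : ℝ) * (((k-1:ℕ)) : ℝ) := by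
      rw [hm]; exact_mod_cast natid
    -- bound m * p n
    have hlnn : (0:ℝ) ≤ ((n - 1).choose (k - 1) : ℝ) * p n :=
      mul_nonneg (Nat.cast_nonneg _) hp0
    have hmp0 : 0 ≤ m * p n := mul_nonneg (Nat.cast_nonneg _) hp0
    have hA0 : (0:ℝ) ≤ (((k-1:ℕ)) : ℝ) * (lam+1) :=
      mul_nonneg (Nat.cast_nonneg _) (by linarith)
    have hmp : m * p n ≤ 2 * ((((k-1:ℕ)) : ℝ) * (lam+1)) / n := by
      have h1 : ((n-1:ℕ) : ℝ) * (m * p n) = (((k-1:ℕ)) : ℝ) * (((n-1).choose (k-1) : ℕ) : ℝ) * p n := by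
        rw [← mul_assoc, hid]; ring
      have h2 : (((k-1:ℕ)) : ℝ) * ((((n-1).choose (k-1) : ℕ) : ℝ) * p n) ≤ (((k-1:ℕ)) : ℝ) * (lam+1) :=
        mul_le_mul_of_nonneg_left (le_of_lt hln) (Nat.cast_nonneg _)
      have h3 : ((n-1:ℕ) : ℝ) * (m * p n) ≤ (((k-1:ℕ)) : ℝ) * (lam+1) := by
        rw [h1, mul_assoc]; exact h2
      have hcast : ((n-1:ℕ) : ℝ) = (n:ℝ) - 1 := by
        have : (1:ℕ) ≤ n := by omega
        push_cast [this]; ring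
      have hn2' : (2:ℝ) ≤ (n:ℝ) := by exact_mod_cast hn2
      rw [hcast] at h3
      rw [le_div_iff₀ hnpos]
      nlinarith [h3, hmp0, mul_nonneg hmp0 (by linarith : (0:ℝ) ≤ (n:ℝ) - 2)]
    calc hexp n k (p n) (fun E => (Xr n r E : ℝ))
        ≤ (n:ℝ)^2 * (m * p n) ^ r := main_bound hp0 hp1
      _ ≤ (n:ℝ)^2 * (2 * ((((k-1:ℕ)) : ℝ) * (lam+1)) / n) ^ r := by
          exact mul_le_mul_of_nonneg_left (pow_le_pow_left₀ hmp0 hmp r) (by positivity)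
      _ = c * ((n:ℝ)^2 / (n:ℝ)^r) := by
          rw [div_pow, hc]; ring
      _ = c * (n:ℝ) ^ ((2:ℝ) - r) := by
          rw [Real.rpow_sub hnpos, show (2:ℝ) = ((2:ℕ):ℝ) by norm_num,
            Real.rpow_natCast, Real.rpow_natCast]
  have hlo : ∀ᶠ n in atTop, 0 ≤ hexp n k (p n) (fun E => (Xr n r E : ℝ)) := by
    filter_upwards [hp] with n hpn
    exact hexp_nonneg hpn.1 hpn.2 (fun E => Nat.cast_nonneg _)
  have htend : Tendsto (fun n : ℕ => c * (n:ℝ) ^ ((2:ℝ) - r)) atTop (nhds 0) := by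
    have hy : (0:ℝ) < (r:ℝ) - 2 := by
      have : (3:ℝ) ≤ r := by exact_mod_cast hr
      linarith
    have t1 : Tendsto (fun x:ℝ => x ^ ((2:ℝ) - r)) atTop (nhds 0) := by
      have := tendsto_rpow_neg_atTop hy
      have e : (fun x:ℝ => x ^ ((2:ℝ) - r)) = fun x:ℝ => x ^ (-((r:ℝ) - 2)) := by
        funext x; rw [show (2:ℝ) - r = -((r:ℝ) - 2) by ring]
      rw [e]; exact this
    have := (t1.comp tendsto_natCast_atTop_atTop).const_mul c
    simpa using this
  constructor
  · rw [Asymptotics.isBigO_iff]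
    refine ⟨c, ?_⟩
    filter_upwards [hub, hlo] with n h1 h2
    rw [Real.norm_of_nonneg h2, Real.norm_of_nonneg (Real.rpow_nonneg (Nat.cast_nonneg n) _)]
    exact h1
  · refine squeeze_zero' ?_ ?_ htend
    · filter_upwards [hp] with n hpn
      exact hprob_nonneg hpn.1 hpn.2 _
    · filter_upwards [hp, hub] with n hpn h1
      exact (markov hpn.1 hpn.2).trans h1
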